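/- Let n ≥ 1 be an integer and define f_{V_n}(v) = sin( 2n · arcsin v )² / ( π n (1 − v²)^{3/2} ) for v ∈ (0,1). Then the second moment satisfies ∫_0^1 v² · f_{V_n}(v) dv = 1 − 1/(4n). -/

import Mathlib

open Real

/-- The probability density `f_{V_n}(v) = sin(2n arcsin v)² / (πn (1−v²)^{3/2})` of the
time-of-flight speed `V_n` of the cursor prepared in the launch-pad state `|c_n⟩`. -/
noncomputable def launchpadSpeedDensity (n : ℕ) (v : ℝ) : ℝ :=
  Real.sin (2 * n * Real.arcsin v) ^ 2 / (π * n * (1 - v ^ 2) ^ ((3 : ℝ) / 2))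

section LaunchpadAux

open intervalIntegral

lemma cos_int_integral (k : ℤ) : ∫ x in (0:ℝ)..(π/2), Real.cos (2*k*x) = if k = 0 then π/2 else 0 := by
  rcases eq_or_ne k 0 with h | h
  · simp [h]
  · rw [if_neg h]
    have hk : (2*(k:ℝ)) ≠ 0 := by
      simp [Int.cast_ne_zero, h]
    rw [intervalIntegral.integral_comp_mul_left (fun x => Real.cos x) hk]
    rw [integral_cos]
    have : 2*(k:ℝ) * (π/2) = k * π := by ring
    rw [this]
    simp [Real.sin_int_mul_pi]

lemma cos_orth (a b : ℕ) : ∫ x in (0:ℝ)..(π/2), Real.cos (2*a*x) * Real.cos (2*b*x)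
    = if a = b then (if a = 0 then π/2 else π/4) else 0 := by
  have key : ∀ x : ℝ, Real.cos (2*a*x) * Real.cos (2*b*x)
      = (Real.cos (2*((((a:ℤ)+(b:ℤ)):ℤ):ℝ)*x) + Real.cos (2*((((a:ℤ)-(b:ℤ)):ℤ):ℝ)*x))/2 := by
    intro x
    push_cast
    rw [show (2*((a:ℝ)+b)*x) = 2*a*x + 2*b*x by ring, show (2*((a:ℝ)-b)*x) = 2*a*x - 2*b*x by ring,
      Real.cos_add, Real.cos_sub]
    ring
  simp_rw [key]
  have hi : ∀ k : ℤ, IntervalIntegrable (fun x => Real.cos (2*k*x)) MeasureTheory.volume 0 (π/2) := by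
    intro k; exact (Real.continuous_cos.comp (by continuity)).intervalIntegrable _ _
  rw [intervalIntegral.integral_div, intervalIntegral.integral_add (hi _) (hi _),
    cos_int_integral, cos_int_integral]
  rcases eq_or_ne a b with h | h
  · subst h
    rcases eq_or_ne a 0 with h0 | h0
    · simp [h0]
    · have : ((a:ℤ) + a) ≠ 0 := by positivity
      simp [h0, this]
      ring
  · have h1 : ((a:ℤ) + b) ≠ 0 ∨ True := Or.inr trivial
    have h2 : ((a:ℤ) - b) ≠ 0 := by
      simpa [sub_eq_zero] using fun hh => h (by exact_mod_cast hh)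
    rcases eq_or_ne ((a:ℤ)+b) 0 with h3 | h3
    · have : a = 0 ∧ b = 0 := by omega
      exact absurd (this.1.trans this.2.symm) h
    · simp [h, h2, h3]

noncomputable def Dfun (n : ℕ) (φ : ℝ) : ℝ :=
  ∑ m ∈ Finset.range (n+1), (if m = 0 ∨ m = n then 1 else 2) * Real.cos (2*m*φ)

lemma Dfun_continuous (n : ℕ) : Continuous (Dfun n) := by
  apply continuous_finset_sum
  intro m _
  exact continuous_const.mul (Real.continuous_cos.comp (by continuity))

lemma Dfun_step (n : ℕ) (hn : 1 ≤ n) (φ : ℝ) :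
    Dfun (n+1) φ = Dfun n φ + Real.cos (2*n*φ) + Real.cos (2*(n+1)*φ) := by
  unfold Dfun
  rw [Finset.sum_range_succ (n := n+1), Finset.sum_range_succ (n := n)]
  have h1 : ∀ m ∈ Finset.range n, ((if m = 0 ∨ m = n+1 then (1:ℝ) else 2) * Real.cos (2*m*φ))
      = (if m = 0 ∨ m = n then (1:ℝ) else 2) * Real.cos (2*m*φ) := by
    intro m hm
    rw [Finset.mem_range] at hm
    have : (m = 0 ∨ m = n+1) ↔ (m = 0 ∨ m = n) := by omega
    simp only [this]
  rw [Finset.sum_congr rfl h1]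
  have hn0 : ¬(n = 0 ∨ n = n+1) := by omega
  have hn1 : ((n+1) = 0 ∨ (n+1) = n+1) := Or.inr rfl
  rw [if_neg hn0, if_pos hn1, Finset.sum_range_succ, if_pos (Or.inr rfl : n = 0 ∨ n = n)]
  push_cast
  ring

lemma Dfun_identity (n : ℕ) (hn : 1 ≤ n) (φ : ℝ) :
    Real.sin φ * Dfun n φ = Real.cos φ * Real.sin (2*n*φ) := by
  induction n, hn using Nat.le_induction with
  | base =>
    have : Dfun 1 φ = 1 + Real.cos (2*φ) := by
      unfold Dfun
      simp [Finset.sum_range_succ]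
    rw [this]
    push_cast
    have e : (2*(1:ℝ)*φ) = 2*φ := by ring
    rw [e, Real.sin_two_mul, Real.cos_two_mul]
    ring
  | succ n hn ih =>
    rw [Dfun_step n hn φ]
    have e1 : (2*((n:ℝ)+1)*φ) = 2*n*φ + 2*φ := by ring
    push_cast
    rw [e1, Real.sin_add, Real.cos_add, Real.sin_two_mul, Real.cos_two_mul]
    have h := Real.sin_sq_add_cos_sq φ
    linear_combination ih - 2*Real.cos φ * Real.sin (2*(n:ℝ)*φ) * h

lemma Dfun_sq_integral (n : ℕ) (hn : 1 ≤ n) :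
    ∫ φ in (0:ℝ)..(π/2), (Dfun n φ)^2 = n*π - π/4 := by
  have expand : ∀ φ : ℝ, (Dfun n φ)^2 = ∑ m ∈ Finset.range (n+1), ∑ m' ∈ Finset.range (n+1),
      ((if m = 0 ∨ m = n then (1:ℝ) else 2) * (if m' = 0 ∨ m' = n then (1:ℝ) else 2)) *
        (Real.cos (2*m*φ) * Real.cos (2*m'*φ)) := by
    intro φ
    rw [sq, Dfun, Finset.sum_mul_sum]
    exact Finset.sum_congr rfl fun m _ => Finset.sum_congr rfl fun m' _ => by ring
  have hc : ∀ m m' : ℕ, Continuous (fun φ : ℝ =>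
      ((if m = 0 ∨ m = n then (1:ℝ) else 2) * (if m' = 0 ∨ m' = n then (1:ℝ) else 2)) *
        (Real.cos (2*m*φ) * Real.cos (2*m'*φ))) := by
    intro m m'
    exact continuous_const.mul ((Real.continuous_cos.comp (by continuity)).mul
      (Real.continuous_cos.comp (by continuity)))
  have step : (∫ φ in (0:ℝ)..(π/2), (Dfun n φ)^2)
      = ∑ m ∈ Finset.range (n+1), ∑ m' ∈ Finset.range (n+1),
        ((if m = 0 ∨ m = n then (1:ℝ) else 2) * (if m' = 0 ∨ m' = n then (1:ℝ) else 2)) *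
          (if m = m' then (if m = 0 then π/2 else π/4) else 0) := by
    simp_rw [expand]
    rw [intervalIntegral.integral_finset_sum
      (fun m _ => (continuous_finset_sum _ (fun m' _ => hc m m')).intervalIntegrable _ _)]
    refine Finset.sum_congr rfl fun m _ => ?_
    rw [intervalIntegral.integral_finset_sum (fun m' _ => (hc m m').intervalIntegrable _ _)]
    refine Finset.sum_congr rfl fun m' _ => ?_
    rw [intervalIntegral.integral_const_mul, cos_orth]
  rw [step]
  have inner : ∀ m ∈ Finset.range (n+1),
      (∑ m' ∈ Finset.range (n+1),
        ((if m = 0 ∨ m = n then (1:ℝ) else 2) * (if m' = 0 ∨ m' = n then (1:ℝ) else 2)) *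
          (if m = m' then (if m = 0 then π/2 else π/4) else 0))
      = (if m = 0 ∨ m = n then (1:ℝ) else 2)^2 * (if m = 0 then π/2 else π/4) := by
    intro m hm
    rw [Finset.sum_eq_single m]
    · rw [if_pos rfl]; ring
    · intro b _ hb
      rw [if_neg (show ¬ m = b from fun h => hb h.symm), mul_zero]
    · intro h; exact absurd hm h
  rw [Finset.sum_congr rfl inner]
  obtain ⟨k, rfl⟩ : ∃ k, n = k + 1 := ⟨n - 1, by omega⟩
  rw [Finset.sum_range_succ', Finset.sum_range_succ]
  have h0 : ((if 0 = 0 ∨ 0 = k+1 then (1:ℝ) else 2)^2 * (if 0 = 0 then π/2 else π/4)) = π/2 := by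
    norm_num
  have htop : ((if k+1 = 0 ∨ k+1 = k+1 then (1:ℝ) else 2)^2 * (if k+1 = 0 then π/2 else π/4)) = π/4 := by
    norm_num
  have hmid : ∀ i ∈ Finset.range k,
      ((if i+1 = 0 ∨ i+1 = k+1 then (1:ℝ) else 2)^2 * (if i+1 = 0 then π/2 else π/4)) = π := by
    intro i hi
    rw [Finset.mem_range] at hi
    rw [if_neg (by omega), if_neg (by omega)]
    ring
  rw [h0, htop, Finset.sum_congr rfl hmid, Finset.sum_const, Finset.card_range]
  push_cast
  ring

end LaunchpadAux

/-- The second moment of the launch-pad time-of-flight speed: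
`∫_0^1 v² f_{V_n}(v) dv = 1 − 1/(4n)`. -/
theorem launchpadSpeedDensity_secondMoment (n : ℕ) (hn : 1 ≤ n) :
    (∫ v in (0:ℝ)..1, v ^ 2 * launchpadSpeedDensity n v) = 1 - 1 / (4 * (n : ℝ)) := by
  have hπ : (0:ℝ) < π := Real.pi_pos
  have hn0 : (0:ℝ) < n := by exact_mod_cast hn
  set P : ℝ → ℝ := fun φ => ∫ t in (0:ℝ)..φ, (Dfun n t)^2 with hPdef
  have hDc : Continuous (fun t => (Dfun n t)^2) := (Dfun_continuous n).pow 2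
  have hPderiv : ∀ φ : ℝ, HasDerivAt P ((Dfun n φ)^2) φ := fun φ =>
    intervalIntegral.integral_hasDerivAt_right (hDc.intervalIntegrable _ _)
      (hDc.stronglyMeasurable.stronglyMeasurableAtFilter) hDc.continuousAt
  have hPc : Continuous P := (Differentiable.continuous (fun φ => (hPderiv φ).differentiableAt))
  set F : ℝ → ℝ := fun v => -(1/(π*n)) * P (Real.arccos v) with hFdef
  have hFc : Continuous F := continuous_const.mul (hPc.comp Real.continuous_arccos)
  have hFd : ∀ v ∈ Set.Ioo (0:ℝ) 1, HasDerivAt F (v ^ 2 * launchpadSpeedDensity n v) v := by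
    rintro v ⟨hv0, hv1⟩
    have h1 : v ≠ -1 := by linarith
    have h2 : v ≠ 1 := ne_of_lt hv1
    have h12 : (0:ℝ) < 1 - v^2 := by nlinarith
    have hs0 : (0:ℝ) < Real.sqrt (1 - v^2) := Real.sqrt_pos.mpr h12
    have harc := Real.hasDerivAt_arccos h1 h2
    have hcomp := ((hPderiv (Real.arccos v)).comp v harc).const_mul (-(1/(π*(n:ℝ))))
    convert hcomp using 1
    · rfl
    · rfl
    · rfl
    -- value equality
    have hcosarc : Real.cos (Real.arccos v) = v := Real.cos_arccos (by linarith) hv1.le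
    have hD : Real.sqrt (1 - v^2) * Dfun n (Real.arccos v)
        = v * Real.sin (2*n*Real.arccos v) := by
      have := Dfun_identity n hn (Real.arccos v)
      rwa [Real.sin_arccos, hcosarc] at this
    have hsinsq : Real.sin (2*(n:ℝ)*Real.arccos v)^2 = Real.sin (2*n*Real.arcsin v)^2 := by
      rw [Real.arccos_eq_pi_div_two_sub_arcsin]
      have e : 2*(n:ℝ)*(π/2 - Real.arcsin v) = n*π - 2*n*Real.arcsin v := by ring
      rw [e, Real.sin_sub, Real.sin_nat_mul_pi]
      have hc2 : Real.cos ((n:ℝ)*π)^2 = 1 := by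
        have h := Real.sin_sq_add_cos_sq ((n:ℝ)*π)
        rw [Real.sin_nat_mul_pi] at h
        linarith
      nlinarith [hc2]
    have hD2 : (Dfun n (Real.arccos v))^2 * (1 - v^2)
        = v^2 * Real.sin (2*n*Real.arcsin v)^2 := by
      have hsq : (Real.sqrt (1 - v^2))^2 = 1 - v^2 := Real.sq_sqrt h12.le
      calc (Dfun n (Real.arccos v))^2 * (1 - v^2)
          = (Real.sqrt (1 - v^2) * Dfun n (Real.arccos v))^2 := by rw [mul_pow, hsq]; ring
        _ = (v * Real.sin (2*n*Real.arccos v))^2 := by rw [hD]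
        _ = v^2 * Real.sin (2*n*Real.arcsin v)^2 := by rw [mul_pow, hsinsq]
    have hrpow : (1 - v^2) ^ ((3:ℝ)/2) = (1 - v^2) * Real.sqrt (1 - v^2) := by
      rw [show ((3:ℝ)/2) = 1 + 1/2 by norm_num, Real.rpow_add h12, Real.rpow_one,
        ← Real.sqrt_eq_rpow]
    rw [launchpadSpeedDensity, hrpow]
    field_simp
    linear_combination (-1 : ℝ) * hD2
  have hnonneg : ∀ v ∈ Set.Ioo (0:ℝ) 1, 0 ≤ v ^ 2 * launchpadSpeedDensity n v := by
    rintro v ⟨hv0, hv1⟩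
    have h12 : (0:ℝ) < 1 - v^2 := by nlinarith
    apply mul_nonneg (sq_nonneg v)
    apply div_nonneg (sq_nonneg _)
    positivity
  have hInt : IntervalIntegrable (fun v => v ^ 2 * launchpadSpeedDensity n v)
      MeasureTheory.volume 0 1 := by
    apply intervalIntegral.intervalIntegrable_deriv_of_nonneg (g := F)
    · exact hFc.continuousOn
    · simpa using hFd
    · simpa using hnonneg
  rw [intervalIntegral.integral_eq_sub_of_hasDeriv_right_of_le zero_le_one hFc.continuousOn
    (fun x hx => (hFd x hx).hasDerivWithinAt) hInt]
  have hF1 : F 1 = 0 := by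
    simp [hFdef, hPdef, Real.arccos_one]
  have hF0 : F 0 = -(1/(π*n)) * ((n:ℝ)*π - π/4) := by
    rw [hFdef]
    simp only [Real.arccos_zero]
    rw [hPdef]
    simp only
    rw [Dfun_sq_integral n hn]
  rw [hF1, hF0]
  field_simp
  ring
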